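/- Let A ∈ Z^{m×n} with full row rank and Hermite normal form AU = (D 0), U = (U_1 U_2) unimodular, U_2 ∈ Z^{n×(n-m)}. Then for any column-index set J ⊆ {1,...,n} with |J| = m, |det(A_{[m]×J})| = gcd(A) · |det((U_2)_{([n]\J)×[n-m]})|, where gcd(A) is the GCD of all m×m subdeterminants of A. -/

import Mathlib

open Matrix

/-- Expansion of `det (M * B)` as a linear combination of maximal minors of `M`. -/
private lemma det_mul_expand {m : ℕ} {ι : Type*} [Fintype ι] [DecidableEq ι]
    (M : Matrix (Fin m) ι ℤ) (B : Matrix ι (Fin m) ℤ) :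
    (M * B).det = ∑ r : Fin m → ι, (∏ c, B (r c) c) * (M.submatrix id r).det := by
  calc (M * B).det = ((M * B)ᵀ).det := (Matrix.det_transpose _).symm
    _ = Matrix.detRowAlternating (fun c => ∑ l, B l c • (Mᵀ l)) := by
        congr 1
        funext c j
        simp [Matrix.mul_apply, mul_comm]
    _ = ∑ r : Fin m → ι, Matrix.detRowAlternating (fun c => B (r c) c • (Mᵀ (r c))) :=
        Matrix.detRowAlternating.toMultilinearMap.map_sum (fun c l => B l c • (Mᵀ l))
    _ = ∑ r : Fin m → ι, (∏ c, B (r c) c) • Matrix.detRowAlternating (fun c => Mᵀ (r c)) :=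
        Finset.sum_congr rfl fun r _ =>
          Matrix.detRowAlternating.toMultilinearMap.map_smul_univ
            (fun c => B (r c) c) (fun c => Mᵀ (r c))
    _ = ∑ r : Fin m → ι, (∏ c, B (r c) c) * (M.submatrix id r).det := by
        refine Finset.sum_congr rfl fun r _ => ?_
        rw [smul_eq_mul]
        congr 1
        rw [← Matrix.det_transpose (M.submatrix id r)]
        rfl

/-- The gcd of the maximal minors of `M` divides any `det (M * B)`. -/
private lemma gcd_dvd_det_mul {m : ℕ} {ι : Type*} [Fintype ι] [DecidableEq ι]
    (M : Matrix (Fin m) ι ℤ) (B : Matrix ι (Fin m) ℤ) :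
    (Finset.univ.gcd fun e' : Fin m ↪ ι => ((M.submatrix id e').det).natAbs) ∣
      ((M * B).det).natAbs := by
  set g := Finset.univ.gcd fun e' : Fin m ↪ ι => ((M.submatrix id e').det).natAbs with hg
  suffices h : (g : ℤ) ∣ (M * B).det by
    have := Int.natAbs_dvd_natAbs.mpr h
    simpa using this
  rw [det_mul_expand]
  refine Finset.dvd_sum fun r _ => ?_
  by_cases hr : Function.Injective r
  · refine Dvd.dvd.mul_left ?_ _
    have h1 : g ∣ ((M.submatrix id r).det).natAbs :=
      Finset.gcd_dvd (Finset.mem_univ (⟨r, hr⟩ : Fin m ↪ ι))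
    exact dvd_trans (Int.ofNat_dvd.mpr h1) (Int.natAbs_dvd.mpr dvd_rfl)
  · obtain ⟨c1, c2, hc, hne⟩ := Function.not_injective_iff.mp hr
    have : (M.submatrix id r).det = 0 :=
      Matrix.det_zero_of_column_eq hne (fun i => by simp [hc])
    simp [this]

/-- With `A * U = (D 0)` a Hermite normal form (`U` unimodular, `D` lower triangular)
of a full-row-rank integer matrix `A` with columns indexed by `Fin m ⊕ Fin k`:
for any set `J` of `m` column indices (the range of the embedding `e`), with
complementary rows given by the embedding `f`,
`|det A_{[m]×J}| = gcd(A) · |det (U₂)_{([n]∖J)×[n-m]}|`, where `U₂` consists of the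
last `k` columns of `U` and `gcd(A)` is the GCD of all `m × m` subdeterminants of `A`. -/
theorem stmt19 {m k : ℕ} (A : Matrix (Fin m) (Fin m ⊕ Fin k) ℤ)
    (hrank : (A.map ((↑) : ℤ → ℚ)).rank = m)
    (U : Matrix (Fin m ⊕ Fin k) (Fin m ⊕ Fin k) ℤ) (hU : U.det = 1 ∨ U.det = -1)
    (D : Matrix (Fin m) (Fin m) ℤ) (hD : ∀ i j : Fin m, (i : ℕ) < (j : ℕ) → D i j = 0)
    (hHNF : A * U = Matrix.fromCols D 0)
    (e : Fin m ↪ (Fin m ⊕ Fin k)) (f : Fin k ↪ (Fin m ⊕ Fin k))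
    (hef : Set.range f = (Set.range e)ᶜ) :
    ((A.submatrix id e).det).natAbs =
      (Finset.univ.gcd
          (fun e' : Fin m ↪ (Fin m ⊕ Fin k) => ((A.submatrix id e').det).natAbs)) *
        ((U.submatrix f Sum.inr).det).natAbs := by
  have hdU : IsUnit U.det := by rcases hU with h | h <;> simp [h]
  set V := U⁻¹ with hV
  have hUV : U * V = 1 := Matrix.mul_nonsing_inv U hdU
  have hVU : V * U = 1 := Matrix.nonsing_inv_mul U hdU
  -- A = D * (first m rows of V)
  have hA : A = D * (V.submatrix Sum.inl id) := by
    have h1 : A = (A * U) * V := by rw [Matrix.mul_assoc, hUV, Matrix.mul_one]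
    rw [hHNF] at h1
    ext i j
    rw [h1]
    simp [Matrix.mul_apply, Fintype.sum_sum_type]
  have key : ∀ e' : Fin m ↪ (Fin m ⊕ Fin k),
      (A.submatrix id e').det = D.det * ((V.submatrix Sum.inl e').det) := by
    intro e'
    have h2 : A.submatrix id e' = D * (V.submatrix Sum.inl e') := by
      rw [hA]; ext i j; simp [Matrix.mul_apply]
    rw [h2, Matrix.det_mul]
  -- gcd of maximal minors of the top m rows of V is 1
  have hWU : (V.submatrix Sum.inl id) * (U.submatrix id Sum.inl) =
      (1 : Matrix (Fin m) (Fin m) ℤ) := by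
    ext i j
    have h3 := congrFun (congrFun hVU (Sum.inl i)) (Sum.inl j)
    rw [Matrix.mul_apply] at h3
    simp only [Matrix.mul_apply, Matrix.submatrix_apply, id_eq]
    rw [h3]
    simp [Matrix.one_apply]
  have hWgcd : (Finset.univ.gcd fun e' : Fin m ↪ (Fin m ⊕ Fin k) =>
      (((V.submatrix Sum.inl id).submatrix id e').det).natAbs) = 1 := by
    have := gcd_dvd_det_mul (V.submatrix Sum.inl id) (U.submatrix id Sum.inl)
    rw [hWU] at this
    simpa using this
  -- gcd of maximal minors of A is |det D|
  have hgcd : (Finset.univ.gcd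
      (fun e' : Fin m ↪ (Fin m ⊕ Fin k) => ((A.submatrix id e').det).natAbs)) =
      D.det.natAbs := by
    have h4 : (fun e' : Fin m ↪ (Fin m ⊕ Fin k) => ((A.submatrix id e').det).natAbs) =
        fun e' : Fin m ↪ (Fin m ⊕ Fin k) => D.det.natAbs * (((V.submatrix Sum.inl id).submatrix id e').det).natAbs := by
      funext e'
      rw [key e', Int.natAbs_mul]
      rfl
    rw [h4, Finset.gcd_mul_left, hWgcd]
    simp
  -- Jacobi complementary minor identity
  have hinj : Function.Injective (Sum.elim (e : Fin m → Fin m ⊕ Fin k) f) := by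
    intro x y hxy
    have hne : ∀ (a : Fin m) (b : Fin k), e a ≠ f b := by
      intro a b hab
      have : f b ∈ (Set.range e)ᶜ := hef ▸ Set.mem_range_self b
      exact this ⟨a, hab⟩
    cases x with
    | inl a => cases y with
      | inl b => simpa using e.injective (by simpa using hxy)
      | inr b => exact absurd hxy (hne a b)
    | inr a => cases y with
      | inl b => exact absurd hxy.symm (hne b a)
      | inr b => simpa using f.injective (by simpa using hxy)
  let g : (Fin m ⊕ Fin k) ≃ (Fin m ⊕ Fin k) :=
    Equiv.ofBijective _ (Finite.injective_iff_bijective.mp hinj)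
  have hgl : ∀ a, g (Sum.inl a) = e a := fun a => rfl
  have hgr : ∀ b, g (Sum.inr b) = f b := fun b => rfl
  set M₁ : Matrix ((Fin m) ⊕ (Fin k)) ((Fin m) ⊕ (Fin k)) ℤ :=
    Matrix.fromBlocks (V.submatrix Sum.inl e) (V.submatrix Sum.inl f) 0 1 with hM₁
  have hprod : M₁ * (U.submatrix g id) =
      Matrix.fromBlocks 1 0 (U.submatrix f Sum.inl) (U.submatrix f Sum.inr) := by
    ext i c
    cases i with
    | inl i =>
      rw [Matrix.mul_apply]
      have h5 : ∀ l, M₁ (Sum.inl i) l * (U.submatrix g id) l c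
          = V (Sum.inl i) (g l) * U (g l) c := by
        intro l; cases l <;> rfl
      rw [Finset.sum_congr rfl fun l _ => h5 l,
        Equiv.sum_comp g (fun j => V (Sum.inl i) j * U j c)]
      have h6 := congrFun (congrFun hVU (Sum.inl i)) c
      rw [Matrix.mul_apply] at h6
      rw [h6]
      cases c <;> simp [Matrix.one_apply]
    | inr i =>
      rw [Matrix.mul_apply, Fintype.sum_sum_type]
      simp only [hM₁, Matrix.fromBlocks_apply₂₁, Matrix.fromBlocks_apply₂₂, Matrix.zero_apply,
        zero_mul, Finset.sum_const_zero, Matrix.one_apply, Matrix.submatrix_apply, id_eq,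
        zero_add, ite_mul, one_mul]
      rw [Finset.sum_ite_eq (Finset.univ : Finset (Fin k)) i (fun b => U (g (Sum.inr b)) c)]
      simp only [Finset.mem_univ, if_true, hgr]
      cases c <;> simp
  have hdet := congrArg Matrix.det hprod
  rw [hM₁, Matrix.det_mul, Matrix.det_fromBlocks_zero₂₁, Matrix.det_fromBlocks_zero₁₂,
    Matrix.det_one, Matrix.det_one, mul_one, one_mul] at hdet
  have hperm : ((U.submatrix g id).det).natAbs = U.det.natAbs := by
    rw [Matrix.det_permute g U, Int.natAbs_mul]
    rcases Int.units_eq_one_or (Equiv.Perm.sign g) with h | h <;> simp [h]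
  have hUnat : U.det.natAbs = 1 := by rcases hU with h | h <;> simp [h]
  have hJacobi : ((V.submatrix Sum.inl e).det).natAbs =
      ((U.submatrix f Sum.inr).det).natAbs := by
    have := congrArg Int.natAbs hdet
    rwa [Int.natAbs_mul, hperm, hUnat, mul_one] at this
  rw [hgcd, key e, Int.natAbs_mul, hJacobi]
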